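/- Let k be a positive integer, let G=(V,E) be a simple (k,2k)-sparse graph on at least three nodes, and let u,v ∈ V be two distinct nonadjacent nodes. Let D be an orientation of G in which every node has indegree at most k and the indegrees of u and v are zero. Suppose that for every node w ∈ V∖{u,v} there is a directed path in D to w from some node distinct from u and v with indegree smaller than k. Then for every subset X ⊆ V with u,v ∈ X and |X| ≥ 3 one has i_G(X) < k|X| − 2k; consequently, G+uv is (k,2k)-sparse. -/

import Mathlib

/-- `indCount H X` is the number of edges of the simple graph `H`
with both endpoints in `X`. -/
noncomputable def indCount {V : Type*} (H : SimpleGraph V) (X : Set V) : ℕ :=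
  Nat.card {e : Sym2 V // e ∈ H.edgeSet ∧ ∀ x ∈ e, x ∈ X}

/-- `H` is `(k, 2k)`-sparse: every set of at least three nodes `X`
induces at most `k|X| - 2k` edges. -/
def IsK2KSparse {V : Type*} (k : ℕ) (H : SimpleGraph V) : Prop :=
  ∀ X : Set V, 3 ≤ Nat.card X →
    (indCount H X : ℤ) ≤ k * Nat.card X - 2 * k

/-- The indegree of the node `w` in the digraph `D`. -/
noncomputable def indeg {V : Type*} (D : V → V → Prop) (w : V) : ℕ :=
  Nat.card {x : V // D x w}

private lemma reach_cases' {V : Type*} (D : V → V → Prop) (X : Set V) {s w : V}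
    (h : Relation.ReflTransGen D s w) :
    w ∈ X → s ∈ X ∨ ∃ a b, D a b ∧ a ∉ X ∧ b ∈ X := by
  induction h with
  | refl => exact fun hw => Or.inl hw
  | @tail b c hsb hbc ih =>
    intro hc
    by_cases hb : b ∈ X
    · exact ih hb
    · exact Or.inr ⟨b, c, hbc, hb, hc⟩

theorem stmt1 {V : Type*} [Fintype V] (k : ℕ) (hk : 0 < k)
    (G : SimpleGraph V) (hV : 3 ≤ Fintype.card V) (hG : IsK2KSparse k G)
    (u v : V) (huv : u ≠ v) (hadj : ¬ G.Adj u v)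
    -- `D` is an orientation of `G`:
    (D : V → V → Prop)
    (hD1 : ∀ x y, D x y → G.Adj x y)
    (hD2 : ∀ x y, G.Adj x y → D x y ∨ D y x)
    (hD3 : ∀ x y, D x y → ¬ D y x)
    -- all indegrees are at most `k`, and the indegrees of `u` and `v` are zero:
    (hdeg : ∀ w, indeg D w ≤ k)
    (hu : indeg D u = 0) (hv : indeg D v = 0)
    -- every node other than `u, v` is reachable from a node distinct from
    -- `u, v` whose indegree is smaller than `k`:
    (hreach : ∀ w : V, w ≠ u → w ≠ v →
      ∃ s : V, s ≠ u ∧ s ≠ v ∧ indeg D s < k ∧ Relation.ReflTransGen D s w) :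
    (∀ X : Set V, u ∈ X → v ∈ X → 3 ≤ Nat.card X →
        (indCount G X : ℤ) < k * Nat.card X - 2 * k) ∧
      IsK2KSparse k (G ⊔ SimpleGraph.fromEdgeSet {s(u, v)}) := by
  classical
  have indCount_eq : ∀ (H : SimpleGraph V) (X : Set V),
      indCount H X
        = (Finset.univ.filter (fun e : Sym2 V => e ∈ H.edgeSet ∧ ∀ x ∈ e, x ∈ X)).card := by
    intro H X
    rw [indCount, Nat.card_eq_fintype_card, Fintype.card_subtype]
  have indeg_eq : ∀ w, indeg D w = (Finset.univ.filter (fun x => D x w)).card := by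
    intro w
    rw [indeg, Nat.card_eq_fintype_card, Fintype.card_subtype]
  have no_in_u : ∀ x, ¬ D x u := by
    intro x hx
    have h1 : x ∈ Finset.univ.filter (fun y => D y u) := by simp [hx]
    have := Finset.card_ne_zero_of_mem h1
    rw [← indeg_eq] at this
    exact this hu
  have no_in_v : ∀ x, ¬ D x v := by
    intro x hx
    have h1 : x ∈ Finset.univ.filter (fun y => D y v) := by simp [hx]
    have := Finset.card_ne_zero_of_mem h1
    rw [← indeg_eq] at this
    exact this hv
  have key : ∀ X : Set V, u ∈ X → v ∈ X → 3 ≤ Nat.card X →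
      (indCount G X : ℤ) < k * Nat.card X - 2 * k := by
    intro X hXu hXv hX3
    set T : Finset V := X.toFinset with hTdef
    have hcard : Nat.card X = T.card := by
      rw [Nat.card_eq_fintype_card, Set.toFinset_card]
    have hT3 : 3 ≤ T.card := by rw [← hcard]; exact hX3
    set A : Finset (V × V) :=
      Finset.univ.filter (fun p : V × V => D p.1 p.2 ∧ p.1 ∈ X ∧ p.2 ∈ X) with hAdef
    -- edges in X ↔ arcs in X
    have hAcard : indCount G X = A.card := by
      rw [indCount_eq]
      refine (Finset.card_bij (fun p _ => s(p.1, p.2)) ?_ ?_ ?_).symm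
      · intro p hp
        simp only [hAdef, Finset.mem_filter, Finset.mem_univ, true_and] at hp
        simp only [Finset.mem_filter, Finset.mem_univ, true_and]
        refine ⟨(SimpleGraph.mem_edgeSet G).mpr (hD1 _ _ hp.1), ?_⟩
        intro x hx
        rcases Sym2.mem_iff.mp hx with rfl | rfl
        · exact hp.2.1
        · exact hp.2.2
      · intro p hp q hq hpq
        simp only [hAdef, Finset.mem_filter, Finset.mem_univ, true_and] at hp hq
        rcases Sym2.eq_iff.mp hpq with ⟨h1, h2⟩ | ⟨h1, h2⟩
        · exact Prod.ext h1 h2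
        · exact absurd hq.1 (h1 ▸ h2 ▸ hD3 _ _ hp.1)
      · intro e he
        simp only [Finset.mem_filter, Finset.mem_univ, true_and] at he
        induction e with
        | _ a b =>
          have hab : G.Adj a b := (SimpleGraph.mem_edgeSet G).mp he.1
          have haX : a ∈ X := he.2 a (Sym2.mem_mk_left a b)
          have hbX : b ∈ X := he.2 b (Sym2.mem_mk_right a b)
          rcases hD2 _ _ hab with h | h
          · exact ⟨(a, b), by simp [hAdef, h, haX, hbX], rfl⟩
          · exact ⟨(b, a), by simp [hAdef, h, haX, hbX], Sym2.eq_swap⟩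
    -- fiberwise count by heads
    set c : V → ℕ := fun b => (A.filter (fun p => p.2 = b)).card with hcdef
    have hfib : A.card = ∑ b ∈ T, c b := by
      refine Finset.card_eq_sum_card_fiberwise (f := Prod.snd) ?_
      intro p hp
      simp only [hAdef, Finset.mem_coe, Finset.mem_filter, Finset.mem_univ, true_and] at hp
      exact Set.mem_toFinset.mpr hp.2.2
    have c_le : ∀ b, c b ≤ indeg D b := by
      intro b
      rw [indeg_eq]
      refine Finset.card_le_card_of_injOn Prod.fst ?_ ?_
      · intro p hp
        simp only [hAdef, Finset.mem_coe, Finset.mem_filter, Finset.mem_univ, true_and] at hp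
        simp only [Finset.mem_coe, Finset.mem_filter, Finset.mem_univ, true_and]
        exact hp.2 ▸ hp.1.1
      · intro p hp q hq h1
        simp only [hAdef, Finset.coe_filter, Set.mem_setOf_eq] at hp hq
        exact Prod.ext h1 (hp.2.trans hq.2.symm)
    have hcu : c u = 0 := by
      rw [hcdef]
      simp only [Finset.card_eq_zero, Finset.filter_eq_empty_iff]
      intro p hp
      simp only [hAdef, Finset.mem_filter, Finset.mem_univ, true_and] at hp
      intro h2
      exact no_in_u p.1 (h2 ▸ hp.1)
    have hcv : c v = 0 := by
      rw [hcdef]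
      simp only [Finset.card_eq_zero, Finset.filter_eq_empty_iff]
      intro p hp
      simp only [hAdef, Finset.mem_filter, Finset.mem_univ, true_and] at hp
      intro h2
      exact no_in_v p.1 (h2 ▸ hp.1)
    -- find a special vertex b0 ∈ X \ {u,v} with c b0 < k
    have huT : u ∈ T := Set.mem_toFinset.mpr hXu
    have hvT : v ∈ T.erase u := Finset.mem_erase.mpr ⟨Ne.symm huv, Set.mem_toFinset.mpr hXv⟩
    set S : Finset V := (T.erase u).erase v with hSdef
    have hScard : S.card = T.card - 2 := by
      rw [hSdef, Finset.card_erase_of_mem hvT, Finset.card_erase_of_mem huT]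
      omega
    have hSne : S.Nonempty := by
      rw [← Finset.card_pos, hScard]; omega
    obtain ⟨w0, hw0S⟩ := hSne
    have hw0v : w0 ≠ v := (Finset.mem_erase.mp hw0S).1
    have hw0u : w0 ≠ u := (Finset.mem_erase.mp (Finset.mem_erase.mp hw0S).2).1
    have hw0X : w0 ∈ X :=
      Set.mem_toFinset.mp (Finset.mem_erase.mp (Finset.mem_erase.mp hw0S).2).2
    obtain ⟨s, hsu, hsv, hsk, hpath⟩ := hreach w0 hw0u hw0v
    have hb0 : ∃ b0, b0 ∈ X ∧ b0 ≠ u ∧ b0 ≠ v ∧ c b0 < k := by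
      rcases reach_cases' D X hpath hw0X with hsX | ⟨a, b, hab, haX, hbX⟩
      · exact ⟨s, hsX, hsu, hsv, lt_of_le_of_lt (c_le s) hsk⟩
      · refine ⟨b, hbX, ?_, ?_, ?_⟩
        · rintro rfl; exact no_in_u a hab
        · rintro rfl; exact no_in_v a hab
        · have h1 : c b ≤ ((Finset.univ.filter (fun x => D x b)).erase a).card := by
            refine Finset.card_le_card_of_injOn Prod.fst ?_ ?_
            · intro p hp
              simp only [hAdef, Finset.mem_coe, Finset.mem_filter, Finset.mem_univ, true_and] at hp
              refine Finset.mem_erase.mpr ⟨?_, ?_⟩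
              · rintro rfl; exact haX hp.1.2.1
              · simp only [Finset.mem_filter, Finset.mem_univ, true_and]
                exact hp.2 ▸ hp.1.1
            · intro p hp q hq h1
              simp only [hAdef, Finset.coe_filter, Set.mem_setOf_eq] at hp hq
              exact Prod.ext h1 (hp.2.trans hq.2.symm)
          have h2 : a ∈ Finset.univ.filter (fun x => D x b) := by simp [hab]
          have h3 := Finset.card_erase_lt_of_mem h2
          rw [← indeg_eq] at h3
          exact lt_of_le_of_lt h1 (lt_of_lt_of_le h3 (hdeg b))
    obtain ⟨b0, hb0X, hb0u, hb0v, hcb0⟩ := hb0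
    have hb0S : b0 ∈ S :=
      Finset.mem_erase.mpr ⟨hb0v, Finset.mem_erase.mpr ⟨hb0u, Set.mem_toFinset.mpr hb0X⟩⟩
    -- sum bound
    have hsum1 : ∑ b ∈ T, c b = ∑ b ∈ S, c b := by
      rw [hSdef, Finset.sum_erase _ hcv, Finset.sum_erase _ hcu]
    have hsum2 : ∑ b ∈ S, c b = c b0 + ∑ b ∈ S.erase b0, c b :=
      (Finset.add_sum_erase S c hb0S).symm
    have hsum3 : ∑ b ∈ S.erase b0, c b ≤ (S.erase b0).card * k := by
      calc ∑ b ∈ S.erase b0, c b ≤ ∑ b ∈ S.erase b0, k :=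
            Finset.sum_le_sum (fun b _ => le_trans (c_le b) (hdeg b))
        _ = (S.erase b0).card * k := by rw [Finset.sum_const, smul_eq_mul]
    have hScard2 : (S.erase b0).card = S.card - 1 := Finset.card_erase_of_mem hb0S
    have hfin : indCount G X + 1 ≤ S.card * k := by
      have hS1 : 1 ≤ S.card := Finset.card_pos.mpr ⟨b0, hb0S⟩
      calc indCount G X + 1 = c b0 + ∑ b ∈ S.erase b0, c b + 1 := by
            rw [hAcard, hfib, hsum1, hsum2]
        _ ≤ (c b0 + 1) + (S.erase b0).card * k := by omega
        _ ≤ k + (S.erase b0).card * k := by omega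
        _ = (S.erase b0).card * k + k := by ring
        _ = S.card * k := by rw [hScard2]; cases' Nat.exists_eq_add_of_le hS1 with m hm; simp [hm]; ring
    have hcast : (S.card : ℤ) = (T.card : ℤ) - 2 := by
      rw [hScard]; omega
    have : (indCount G X : ℤ) + 1 ≤ ((T.card : ℤ) - 2) * k := by
      rw [← hcast]
      exact_mod_cast hfin
    rw [hcard]
    push_cast
    linarith
  refine ⟨key, ?_⟩
  -- sparsity of G + uv
  have hE' : ∀ e : Sym2 V,
      e ∈ (G ⊔ SimpleGraph.fromEdgeSet {s(u, v)}).edgeSet ↔ e ∈ G.edgeSet ∨ e = s(u, v) := by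
    intro e
    simp only [SimpleGraph.edgeSet_sup, SimpleGraph.edgeSet_fromEdgeSet, Set.mem_union,
      Set.mem_diff, Set.mem_singleton_iff, Set.mem_setOf_eq]
    constructor
    · rintro (h | ⟨h, -⟩)
      · exact Or.inl h
      · exact Or.inr h
    · rintro (h | rfl)
      · exact Or.inl h
      · exact Or.inr ⟨rfl, by simp [Sym2.mk_isDiag_iff, huv]⟩
  intro X hX3
  by_cases hUV : u ∈ X ∧ v ∈ X
  · have h1 := key X hUV.1 hUV.2 hX3
    have h2 : indCount (G ⊔ SimpleGraph.fromEdgeSet {s(u, v)}) X ≤ indCount G X + 1 := by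
      rw [indCount_eq, indCount_eq]
      refine le_trans (Finset.card_le_card (t := insert s(u, v) (Finset.univ.filter
            (fun e : Sym2 V => e ∈ G.edgeSet ∧ ∀ x ∈ e, x ∈ X))) ?_)
        (Finset.card_insert_le _ _)
      intro e he
      simp only [Finset.mem_filter, Finset.mem_univ, true_and] at he
      rcases (hE' e).mp he.1 with h | h
      · refine Finset.mem_insert_of_mem ?_
        simp only [Finset.mem_filter, Finset.mem_univ, true_and]
        exact ⟨h, he.2⟩
      · subst h
        exact Finset.mem_insert_self _ _
    have h2' : (indCount (G ⊔ SimpleGraph.fromEdgeSet {s(u, v)}) X : ℤ)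
        ≤ (indCount G X : ℤ) + 1 := by exact_mod_cast h2
    have h1' := Int.lt_iff_add_one_le.mp h1
    linarith
  · have h2 : indCount (G ⊔ SimpleGraph.fromEdgeSet {s(u, v)}) X = indCount G X := by
      rw [indCount_eq, indCount_eq]
      congr 1
      ext e
      simp only [Finset.mem_filter, Finset.mem_univ, true_and]
      rw [hE']
      constructor
      · rintro ⟨h | rfl, h2⟩
        · exact ⟨h, h2⟩
        · exact absurd ⟨h2 u (Sym2.mem_mk_left u v), h2 v (Sym2.mem_mk_right u v)⟩ hUV
      · rintro ⟨h, h2⟩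
        exact ⟨Or.inl h, h2⟩
    rw [h2]
    exact hG X hX3
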